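/- Let V be a real inner product space of dimension at least 3, let x ≠ y be unit vectors in V, and let 0 < ε < 2. Then there exist unit vectors e₀ = x, e₁, …, e_{n+1} = y in V with ‖e_i − e_{i−1}‖ = ε for every i = 1, …, n+1. Consequently, if f is a non-constant real-valued function on the unit sphere of V, then there exist unit vectors x, y with ‖x − y‖ = ε and f(x) < f(y). -/

import Mathlib

open RealInnerProductSpace

/-- In a real inner product space of rank ≥ 3, any two vectors have a common
unit orthogonal vector. -/
lemma exists_unit_orthogonal {V : Type*} [NormedAddCommGroup V] [InnerProductSpace ℝ V]
    (hdim : 3 ≤ Module.rank ℝ V) (x z : V) :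
    ∃ u : V, ‖u‖ = 1 ∧ ⟪x, u⟫ = 0 ∧ ⟪z, u⟫ = 0 := by
  set K : Submodule ℝ V := Submodule.span ℝ {x, z} with hK
  have hfd : FiniteDimensional ℝ K := by
    apply FiniteDimensional.span_of_finite
    exact (Set.finite_singleton z).insert x
  have hne : Kᗮ ≠ ⊥ := by
    intro hbot
    have htop : K = ⊤ := Submodule.orthogonal_eq_bot_iff.mp hbot
    have h2 : Module.rank ℝ K ≤ 2 := by
      refine (rank_span_le _).trans ?_
      refine (Cardinal.mk_insert_le).trans ?_
      simp only [Cardinal.mk_singleton]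
      exact le_of_eq one_add_one_eq_two
    rw [htop] at h2
    have := rank_top ℝ V
    rw [this] at h2
    exact absurd (hdim.trans h2) (by norm_num)
  obtain ⟨v, hvK, hv0⟩ := Submodule.exists_mem_ne_zero_of_ne_bot hne
  refine ⟨‖v‖⁻¹ • v, ?_, ?_, ?_⟩
  · rw [norm_smul, norm_inv, norm_norm]
    field_simp [norm_ne_zero_iff.mpr hv0]
  · have := hvK x (Submodule.subset_span (by simp))
    rw [real_inner_smul_right, this, mul_zero]
  · have := hvK z (Submodule.subset_span (by simp))
    rw [real_inner_smul_right, this, mul_zero]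

lemma exists_two_step {V : Type*} [NormedAddCommGroup V] [InnerProductSpace ℝ V]
    (hdim : 3 ≤ Module.rank ℝ V) (ε : ℝ) (hε0 : 0 < ε) (hε2 : ε < 2)
    (x z : V) (hx : ‖x‖ = 1) (hz : ‖z‖ = 1)
    (h1 : 2 * (1 - ε ^ 2 / 2) ^ 2 - 1 ≤ ⟪x, z⟫) (h2 : (0 : ℝ) ≤ ⟪x, z⟫) :
    ∃ w : V, ‖w‖ = 1 ∧ ‖w - x‖ = ε ∧ ‖z - w‖ = ε := by
  obtain ⟨u, hu, hxu, hzu⟩ := exists_unit_orthogonal hdim x z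
  set c : ℝ := 1 - ε ^ 2 / 2 with hc
  set t : ℝ := ⟪x, z⟫ with ht
  have ht1 : (0:ℝ) < 1 + t := by linarith
  set a : ℝ := c / (1 + t) with ha
  have hb0 : 0 ≤ 1 - a ^ 2 * (2 + 2 * t) := by
    have h3 : a ^ 2 * (2 + 2 * t) = 2 * c ^ 2 / (1 + t) := by
      rw [ha, div_pow, div_mul_eq_mul_div, div_eq_div_iff (by positivity) ht1.ne']; ring
    rw [h3, sub_nonneg, div_le_one ht1]
    nlinarith
  set b : ℝ := Real.sqrt (1 - a ^ 2 * (2 + 2 * t)) with hb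
  have hbsq : b ^ 2 = 1 - a ^ 2 * (2 + 2 * t) := Real.sq_sqrt hb0
  set w : V := a • (x + z) + b • u with hw
  have hxx : ⟪x, x⟫ = 1 := by
    rw [real_inner_self_eq_norm_sq, hx]; norm_num
  have hzz : ⟪z, z⟫ = 1 := by
    rw [real_inner_self_eq_norm_sq, hz]; norm_num
  have huu : ⟪u, u⟫ = 1 := by
    rw [real_inner_self_eq_norm_sq, hu]; norm_num
  have hzx : ⟪z, x⟫ = t := by rw [real_inner_comm]
  have hux : ⟪u, x⟫ = 0 := by rw [real_inner_comm]; exact hxu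
  have huz : ⟪u, z⟫ = 0 := by rw [real_inner_comm]; exact hzu
  have hww : ⟪w, w⟫ = 1 := by
    simp only [hw, inner_add_left, inner_add_right, real_inner_smul_left,
      real_inner_smul_right, hxx, hzz, huu, hzx, hux, huz, hxu, hzu, ← ht]
    linear_combination hbsq
  have hwx : ⟪w, x⟫ = c := by
    simp only [hw, inner_add_left, inner_add_right, real_inner_smul_left,
      real_inner_smul_right, hxx, hzx, hux]
    have key : a * (1 + t) = c := by rw [ha]; field_simp
    linear_combination key
  have hwz : ⟪w, z⟫ = c := by
    simp only [hw, inner_add_left, inner_add_right, real_inner_smul_left,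
      real_inner_smul_right, hzz, huz, ← ht]
    have key : a * (1 + t) = c := by rw [ha]; field_simp
    linear_combination key
  have hwn : ‖w‖ = 1 := by
    have h4 : ‖w‖ ^ 2 = 1 := by rw [← real_inner_self_eq_norm_sq, hww]
    nlinarith [norm_nonneg w]
  refine ⟨w, hwn, ?_, ?_⟩
  · have h5 : ‖w - x‖ ^ 2 = ε ^ 2 := by
      rw [norm_sub_sq_real, hwn, hwx, hx]; rw [hc]; ring
    rw [← Real.sqrt_sq (norm_nonneg _), h5, Real.sqrt_sq hε0.le]
  · have h5 : ‖z - w‖ ^ 2 = ε ^ 2 := by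
      rw [norm_sub_sq_real, real_inner_comm, hwz, hwn, hz]; rw [hc]; ring
    rw [← Real.sqrt_sq (norm_nonneg _), h5, Real.sqrt_sq hε0.le]

/-- Geodesic subdivision: two distinct unit vectors can be joined by a chain of
unit vectors with consecutive inner products at least `1 - η`. -/
lemma exists_geodesic_chain {V : Type*} [NormedAddCommGroup V] [InnerProductSpace ℝ V]
    (hdim : 3 ≤ Module.rank ℝ V) (x y : V) (hx : ‖x‖ = 1) (hy : ‖y‖ = 1) (hxy : x ≠ y)
    (η : ℝ) (hη : 0 < η) :
    ∃ m : ℕ, 1 ≤ m ∧ ∃ p : ℕ → V, p 0 = x ∧ p m = y ∧ (∀ j, ‖p j‖ = 1) ∧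
      ∀ j, 1 - η ≤ ⟪p j, p (j + 1)⟫ := by
  have hxx : ⟪x, x⟫ = 1 := by rw [real_inner_self_eq_norm_sq, hx]; norm_num
  have hyy : ⟪y, y⟫ = 1 := by rw [real_inner_self_eq_norm_sq, hy]; norm_num
  set t₀ : ℝ := ⟪x, y⟫ with ht₀
  have ht0le : t₀ ≤ 1 := by
    calc t₀ ≤ ‖x‖ * ‖y‖ := real_inner_le_norm x y
    _ = 1 := by rw [hx, hy]; norm_num
  have ht0lt : t₀ < 1 := by
    rcases lt_or_eq_of_le ht0le with h | h
    · exact h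
    · exact absurd ((inner_eq_one_iff_of_norm_eq_one hx hy).mp h) hxy
  have ht0ge : -1 ≤ t₀ := by
    have := abs_real_inner_le_norm x y
    rw [hx, hy] at this
    have := abs_le.mp (by simpa using this)
    linarith [this.1]
  set α : ℝ := Real.arccos t₀ with hα
  have hαpos : 0 < α := Real.arccos_pos.mpr ht0lt
  have hαπ : α ≤ Real.pi := Real.arccos_le_pi t₀
  have hcosα : Real.cos α = t₀ := Real.cos_arccos ht0ge ht0le
  -- find u
  have hu : ∃ u : V, ‖u‖ = 1 ∧ ⟪x, u⟫ = 0 ∧ y = Real.cos α • x + Real.sin α • u := by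
    by_cases hyx : y = -x
    · obtain ⟨u, hu1, hu2, -⟩ := exists_unit_orthogonal hdim x x
      have ht0 : t₀ = -1 := by
        rw [ht₀, hyx, inner_neg_right, hxx]
      refine ⟨u, hu1, hu2, ?_⟩
      rw [hα, ht0, Real.arccos_neg_one, Real.cos_pi, Real.sin_pi, hyx]
      simp
    · have ht0gt : -1 < t₀ := by
        rcases lt_or_eq_of_le ht0ge with h | h
        · exact h
        · exfalso
          apply hyx
          have hnx : ‖(-x : V)‖ = 1 := by rwa [norm_neg]
          have : ⟪(-x : V), y⟫ = 1 := by rw [inner_neg_left, ← ht₀, ← h]; norm_num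
          exact ((inner_eq_one_iff_of_norm_eq_one hnx hy).mp this).symm
      have hs0 : (0:ℝ) < 1 - t₀ ^ 2 := by nlinarith
      set s : ℝ := Real.sqrt (1 - t₀ ^ 2) with hs
      have hspos : 0 < s := Real.sqrt_pos.mpr hs0
      have hssq : s ^ 2 = 1 - t₀ ^ 2 := Real.sq_sqrt hs0.le
      have hsinα : Real.sin α = s := by rw [hα, Real.sin_arccos, hs]
      refine ⟨s⁻¹ • (y - t₀ • x), ?_, ?_, ?_⟩
      · have hnsq : ‖y - t₀ • x‖ ^ 2 = s ^ 2 := by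
          rw [← real_inner_self_eq_norm_sq]
          have hyx2 : ⟪y, x⟫ = t₀ := by rw [real_inner_comm]
          simp only [inner_sub_left, inner_sub_right, real_inner_smul_left,
            real_inner_smul_right, hxx, hyy, ← ht₀, hyx2]
          rw [hssq]; ring
        have hn : ‖y - t₀ • x‖ = s := by
          rw [← Real.sqrt_sq (norm_nonneg _), hnsq, Real.sqrt_sq hspos.le]
        rw [norm_smul, hn, norm_inv, Real.norm_eq_abs, abs_of_pos hspos]
        field_simp
      · rw [real_inner_smul_right, inner_sub_right, real_inner_smul_right, hxx, ← ht₀]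
        simp
      · rw [hcosα, hsinα, smul_smul, mul_inv_cancel₀ hspos.ne', one_smul]
        abel
  obtain ⟨u, hu1, hu2, hyu⟩ := hu
  have huu : ⟪u, u⟫ = 1 := by rw [real_inner_self_eq_norm_sq, hu1]; norm_num
  have hux : ⟪u, x⟫ = 0 := by rw [real_inner_comm]; exact hu2
  -- inner product formula
  have hform : ∀ a b a' b' : ℝ, ⟪a • x + b • u, a' • x + b' • u⟫ = a * a' + b * b' := by
    intro a b a' b'
    simp only [inner_add_left, inner_add_right, real_inner_smul_left, real_inner_smul_right,
      hxx, huu, hu2, hux]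
    ring
  -- choose m
  obtain ⟨N, hN⟩ := exists_nat_ge (Real.pi ^ 2 / (2 * η))
  set m : ℕ := max N 1 with hm
  have hm1 : 1 ≤ m := le_max_right N 1
  have hmpos : (0:ℝ) < m := by exact_mod_cast Nat.lt_of_lt_of_le Nat.zero_lt_one hm1
  have hmge : Real.pi ^ 2 / (2 * η) ≤ m := hN.trans (by exact_mod_cast le_max_left N 1)
  set θ : ℝ := α / m with hθ
  have hθbound : 1 - η ≤ Real.cos θ := by
    have h1 : θ ^ 2 / 2 ≤ η := by
      have hθle : θ ≤ Real.pi / m := by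
        rw [hθ]; gcongr
      have hθ0 : 0 ≤ θ := by positivity
      have h2 : θ ^ 2 ≤ (Real.pi / m) ^ 2 := by
        apply pow_le_pow_left₀ hθ0 hθle
      have h3 : (Real.pi / m) ^ 2 / 2 ≤ η := by
        rw [div_pow, div_div, div_le_iff₀ (by positivity)]
        rw [div_le_iff₀ (by positivity)] at hmge
        have hm1' : (1:ℝ) ≤ (m:ℝ) := by exact_mod_cast hm1
        have hmm : (m:ℝ) ≤ (m:ℝ) ^ 2 := by nlinarith
        nlinarith [Real.pi_pos]
      linarith
    linarith [Real.one_sub_sq_div_two_le_cos (x := θ)]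
  refine ⟨m, hm1, fun j => Real.cos (j * θ) • x + Real.sin (j * θ) • u, ?_, ?_, ?_, ?_⟩
  · simp
  · have hmt : (m : ℝ) * θ = α := by rw [hθ]; field_simp
    show Real.cos (↑m * θ) • x + Real.sin (↑m * θ) • u = y
    rw [hmt, ← hyu]
  · intro j
    show ‖Real.cos (↑j * θ) • x + Real.sin (↑j * θ) • u‖ = 1
    have h4 : ‖Real.cos ((j:ℝ) * θ) • x + Real.sin ((j:ℝ) * θ) • u‖ ^ 2 = 1 := by
      rw [← real_inner_self_eq_norm_sq, hform]
      linear_combination Real.cos_sq_add_sin_sq ((j:ℝ) * θ)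
    rw [← Real.sqrt_sq (norm_nonneg _), h4, Real.sqrt_one]
  · intro j
    show 1 - η ≤ ⟪Real.cos (↑j * θ) • x + Real.sin (↑j * θ) • u,
        Real.cos (↑(j+1) * θ) • x + Real.sin (↑(j+1) * θ) • u⟫
    rw [hform]
    have hcc : Real.cos ((j:ℝ) * θ) * Real.cos (↑(j+1) * θ) +
        Real.sin ((j:ℝ) * θ) * Real.sin (↑(j+1) * θ) = Real.cos θ := by
      rw [mul_comm (Real.cos _), mul_comm (Real.sin _), ← Real.cos_sub]
      congr 1
      push_cast
      ring
    rw [hcc]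
    exact hθbound

theorem strict_chain_on_sphere {V : Type*} [NormedAddCommGroup V] [InnerProductSpace ℝ V]
    (hdim : 3 ≤ Module.rank ℝ V) (ε : ℝ) (hε0 : 0 < ε) (hε2 : ε < 2) :
    (∀ x y : V, ‖x‖ = 1 → ‖y‖ = 1 → x ≠ y →
      ∃ (n : ℕ) (e : Fin (n + 2) → V), e 0 = x ∧ e (Fin.last (n + 1)) = y ∧
        (∀ i, ‖e i‖ = 1) ∧ ∀ i : Fin (n + 1), ‖e i.succ - e i.castSucc‖ = ε) ∧
      ∀ f : V → ℝ, (∃ a b : V, ‖a‖ = 1 ∧ ‖b‖ = 1 ∧ f a ≠ f b) →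
        ∃ x y : V, ‖x‖ = 1 ∧ ‖y‖ = 1 ∧ ‖x - y‖ = ε ∧ f x < f y := by
  have part1 : ∀ x y : V, ‖x‖ = 1 → ‖y‖ = 1 → x ≠ y →
      ∃ (n : ℕ) (e : Fin (n + 2) → V), e 0 = x ∧ e (Fin.last (n + 1)) = y ∧
        (∀ i, ‖e i‖ = 1) ∧ ∀ i : Fin (n + 1), ‖e i.succ - e i.castSucc‖ = ε := by
    intro x y hx hy hxy
    set c : ℝ := 1 - ε ^ 2 / 2 with hc
    have hc1 : -1 < c := by rw [hc]; nlinarith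
    have hc2 : c < 1 := by rw [hc]; nlinarith
    set η : ℝ := min (1/2 : ℝ) (2 - 2 * c ^ 2) with hη
    have hηpos : 0 < η := by
      apply lt_min
      · norm_num
      · nlinarith
    obtain ⟨m, hm1, p, hp0, hpm, hpu, hpin⟩ := exists_geodesic_chain hdim x y hx hy hxy η hηpos
    have hW : ∀ j : ℕ, ∃ w : V, ‖w‖ = 1 ∧ ‖w - p j‖ = ε ∧ ‖p (j+1) - w‖ = ε := by
      intro j
      apply exists_two_step hdim ε hε0 hε2 (p j) (p (j+1)) (hpu j) (hpu (j+1))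
      · have := hpin j
        have h1 : η ≤ 2 - 2 * c ^ 2 := min_le_right _ _
        rw [← hc]
        linarith
      · have := hpin j
        have h1 : η ≤ 1/2 := min_le_left _ _
        linarith
    choose w hw1 hw2 hw3 using hW
    set E : ℕ → V := fun k => if Even k then p (k / 2) else w (k / 2) with hE
    have hEeven : ∀ j : ℕ, E (2 * j) = p j := by
      intro j
      simp only [hE, if_pos (even_two_mul j), Nat.mul_div_cancel_left j (by norm_num : 0 < 2)]
    have hEodd : ∀ j : ℕ, E (2 * j + 1) = w j := by
      intro j
      have hodd : ¬ Even (2 * j + 1) := by simp [Nat.even_add_one, Nat.even_mul]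
      simp only [hE, if_neg hodd]
      congr 1
      omega
    refine ⟨2 * m - 1, fun i => E i.val, ?_, ?_, ?_, ?_⟩
    · show E 0 = x
      have := hEeven 0
      simpa [hp0] using this
    · show E (Fin.last (2 * m - 1 + 1)).val = y
      have hval : (Fin.last (2 * m - 1 + 1)).val = 2 * m := by
        simp [Fin.last]; omega
      rw [hval, hEeven m, hpm]
    · intro i
      show ‖E i.val‖ = 1
      rcases Nat.even_or_odd i.val with ⟨j, hj⟩ | ⟨j, hj⟩
      · have : i.val = 2 * j := by omega
        rw [this, hEeven j]; exact hpu j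
      · have : i.val = 2 * j + 1 := by omega
        rw [this, hEodd j]; exact hw1 j
    · intro i
      show ‖E (i.succ.val) - E (i.castSucc.val)‖ = ε
      have hsv : i.succ.val = i.val + 1 := rfl
      have hcv : i.castSucc.val = i.val := rfl
      rw [hsv, hcv]
      rcases Nat.even_or_odd i.val with ⟨j, hj⟩ | ⟨j, hj⟩
      · have h1 : i.val = 2 * j := by omega
        have h2 : i.val + 1 = 2 * j + 1 := by omega
        rw [h1, hEodd j, hEeven j]
        exact hw2 j
      · have h1 : i.val = 2 * j + 1 := by omega
        have h2 : i.val + 1 = 2 * (j + 1) := by omega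
        have h3 : E (2 * j + 1 + 1) = p (j + 1) := by
          rw [show 2 * j + 1 + 1 = 2 * (j + 1) from by ring, hEeven]
        rw [h1, h3, hEodd j]
        exact hw3 j
  refine ⟨part1, ?_⟩
  intro f ⟨a, b, ha, hb, hfab⟩
  -- reduce to the case f x0 < f y0
  have key : ∀ x0 y0 : V, ‖x0‖ = 1 → ‖y0‖ = 1 → f x0 < f y0 →
      ∃ x y : V, ‖x‖ = 1 ∧ ‖y‖ = 1 ∧ ‖x - y‖ = ε ∧ f x < f y := by
    intro x0 y0 hx0 hy0 hflt
    have hne : x0 ≠ y0 := by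
      intro h; rw [h] at hflt; exact lt_irrefl _ hflt
    obtain ⟨n, e, he0, helast, heu, hestep⟩ := part1 x0 y0 hx0 hy0 hne
    by_contra hcon
    push_neg at hcon
    have hdesc : ∀ i : Fin (n + 1), f (e i.succ) ≤ f (e i.castSucc) := fun i =>
      hcon _ _ (heu _) (heu _) (by rw [norm_sub_rev]; exact hestep i)
    have mono : ∀ k : ℕ, ∀ hk : k < n + 2, f (e ⟨k, hk⟩) ≤ f (e 0) := by
      intro k
      induction k with
      | zero => intro hk; exact le_refl _
      | succ k ih =>
        intro hk
        have hk' : k < n + 2 := by omega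
        have hk'' : k < n + 1 := by omega
        have step := hdesc ⟨k, hk''⟩
        have hsucc : (⟨k, hk''⟩ : Fin (n+1)).succ = ⟨k + 1, hk⟩ := rfl
        have hcast : (⟨k, hk''⟩ : Fin (n+1)).castSucc = ⟨k, hk'⟩ := rfl
        rw [hsucc, hcast] at step
        exact step.trans (ih hk')
    have hlast := mono (n + 1) (by omega)
    have hl : (⟨n + 1, by omega⟩ : Fin (n + 2)) = Fin.last (n + 1) := rfl
    rw [hl, helast, he0] at hlast
    exact absurd hflt (not_lt.mpr hlast)
  rcases lt_or_gt_of_ne hfab with h | h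
  · exact key a b ha hb h
  · exact key b a hb ha h
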